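/- For any nonzero scalar λ in F, the Verma U_q(sl_2)-module M(λ) is irreducible if and only if λ is not of the form ±q^n for any natural number n. -/

import Mathlib

/-- Assume `q` is not a root of unity.  The Verma module `M(λ)`
(realized on `ℕ →₀ F` with its defining basis action) is irreducible (i.e. the only
subspaces invariant under `E`, `F`, `K`, `K⁻¹` are `⊥` and `⊤`) if and only if
`λ ≠ ±qⁿ` for every natural number `n`. -/
theorem uq_verma_irreducible_iff (F : Type*) [Field F] (q : F) (hq0 : q ≠ 0)
    (hqroot : ∀ n : ℕ, n ≠ 0 → q ^ n ≠ 1)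
    (lam : F) (hlam : lam ≠ 0)
    (eM fM kM kinvM : Module.End F (ℕ →₀ F))
    (hk : ∀ i : ℕ, kM (Finsupp.single i 1) =
        (lam * q ^ (-2 * (i : ℤ))) • Finsupp.single i 1)
    (hkinv : ∀ i : ℕ, kinvM (Finsupp.single i 1) =
        (lam⁻¹ * q ^ (2 * (i : ℤ))) • Finsupp.single i 1)
    (hf : ∀ i : ℕ, fM (Finsupp.single i 1) =
        ((q ^ (i + 1) - q⁻¹ ^ (i + 1)) / (q - q⁻¹)) • Finsupp.single (i + 1) 1)
    (he0 : eM (Finsupp.single 0 1) = 0)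
    (he : ∀ i : ℕ, eM (Finsupp.single (i + 1) 1) =
        ((lam * q ^ (-(i : ℤ)) - lam⁻¹ * q ^ (i : ℤ)) / (q - q⁻¹)) • Finsupp.single i 1) :
    (∀ W : Submodule F (ℕ →₀ F),
        W ≤ W.comap eM → W ≤ W.comap fM → W ≤ W.comap kM → W ≤ W.comap kinvM →
        W = ⊥ ∨ W = ⊤)
      ↔ (∀ n : ℕ, lam ≠ q ^ n ∧ lam ≠ -(q ^ n)) := by
  classical
  -- q - q⁻¹ ≠ 0
  have hq2 : q - q⁻¹ ≠ 0 := by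
    intro h
    have h' : q = q⁻¹ := sub_eq_zero.mp h
    apply hqroot 2 (by norm_num)
    rw [sq]
    nth_rewrite 2 [h']
    exact mul_inv_cancel₀ hq0
  -- expansion of a linear map over the basis
  have key : ∀ (T : Module.End F (ℕ →₀ F)) (v : ℕ →₀ F),
      T v = v.sum fun i a => a • T (Finsupp.single i 1) := by
    intro T v
    conv_lhs => rw [← Finsupp.sum_single v]
    rw [map_finsuppSum]
    refine Finsupp.sum_congr ?_
    intro i _
    rw [← Finsupp.smul_single_one, map_smul]
  -- evaluation lemmas
  have eval_e : ∀ (v : ℕ →₀ F) (j : ℕ),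
      (eM v) j = v (j + 1) * ((lam * q ^ (-(j : ℤ)) - lam⁻¹ * q ^ (j : ℤ)) / (q - q⁻¹)) := by
    intro v j
    rw [key eM v, Finsupp.sum_apply]
    have h1 : ∀ i a, (a • eM (Finsupp.single i 1)) j =
        if i = j + 1 then a * ((lam * q ^ (-(j : ℤ)) - lam⁻¹ * q ^ (j : ℤ)) / (q - q⁻¹)) else 0 := by
      intro i a
      cases i with
      | zero => simp [he0]
      | succ k =>
        rw [he k]
        simp only [Finsupp.smul_apply, Finsupp.single_apply, smul_eq_mul, smul_ite, smul_zero]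
        by_cases hk' : k = j
        · subst hk'; simp [mul_comm]
        · rw [if_neg hk', if_neg (by omega)]
          simp
    calc (v.sum fun i a => (a • eM (Finsupp.single i 1)) j)
        = v.sum fun i a => if i = j + 1 then
            a * ((lam * q ^ (-(j : ℤ)) - lam⁻¹ * q ^ (j : ℤ)) / (q - q⁻¹)) else 0 := by
          exact Finsupp.sum_congr fun i _ => h1 i (v i)
      _ = _ := by
          rw [Finsupp.sum_ite_eq' v (j + 1)]
          split_ifs with h
          · rfl
          · rw [Finsupp.notMem_support_iff.mp h, zero_mul]
  have eval_f0 : ∀ (v : ℕ →₀ F), (fM v) 0 = 0 := by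
    intro v
    rw [key fM v, Finsupp.sum_apply]
    calc (v.sum fun i a => (a • fM (Finsupp.single i 1)) 0)
        = v.sum fun _ _ => (0 : F) := by
          refine Finsupp.sum_congr fun i _ => ?_
          rw [hf i]
          simp [Finsupp.single_apply]
      _ = 0 := Finset.sum_const_zero
  have eval_fs : ∀ (v : ℕ →₀ F) (j : ℕ),
      (fM v) (j + 1) = v j * ((q ^ (j + 1) - q⁻¹ ^ (j + 1)) / (q - q⁻¹)) := by
    intro v j
    rw [key fM v, Finsupp.sum_apply]
    have h1 : ∀ i, ((v i) • fM (Finsupp.single i 1)) (j + 1) =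
        if i = j then v i * ((q ^ (j + 1) - q⁻¹ ^ (j + 1)) / (q - q⁻¹)) else 0 := by
      intro i
      rw [hf i]
      simp only [Finsupp.smul_apply, Finsupp.single_apply, smul_eq_mul]
      by_cases hij : i = j
      · subst hij
        rw [if_pos rfl, if_pos rfl]
        ring
      · rw [if_neg (by omega), if_neg hij]
        ring
    calc (v.sum fun i a => (a • fM (Finsupp.single i 1)) (j + 1))
        = v.sum fun i a => if i = j then
            v i * ((q ^ (j + 1) - q⁻¹ ^ (j + 1)) / (q - q⁻¹)) else 0 :=
          Finsupp.sum_congr fun i _ => h1 i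
      _ = _ := by
          rw [Finsupp.sum_ite_eq' v j]
          split_ifs with h
          · rfl
          · rw [Finsupp.notMem_support_iff.mp h, zero_mul]
  have eval_k : ∀ (v : ℕ →₀ F) (j : ℕ),
      (kM v) j = v j * (lam * q ^ (-2 * (j : ℤ))) := by
    intro v j
    rw [key kM v, Finsupp.sum_apply]
    have h1 : ∀ i, ((v i) • kM (Finsupp.single i 1)) j =
        if i = j then v i * (lam * q ^ (-2 * (j : ℤ))) else 0 := by
      intro i
      rw [hk i]
      simp only [Finsupp.smul_apply, Finsupp.single_apply, smul_eq_mul, smul_ite, smul_zero]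
      by_cases hij : i = j
      · subst hij; simp [mul_comm]
      · simp [hij]
    calc (v.sum fun i a => (a • kM (Finsupp.single i 1)) j)
        = v.sum fun i a => if i = j then v i * (lam * q ^ (-2 * (j : ℤ))) else 0 :=
          Finsupp.sum_congr fun i _ => h1 i
      _ = _ := by
          rw [Finsupp.sum_ite_eq' v j]
          split_ifs with h
          · rfl
          · rw [Finsupp.notMem_support_iff.mp h, zero_mul]
  have eval_kinv : ∀ (v : ℕ →₀ F) (j : ℕ),
      (kinvM v) j = v j * (lam⁻¹ * q ^ (2 * (j : ℤ))) := by
    intro v j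
    rw [key kinvM v, Finsupp.sum_apply]
    have h1 : ∀ i, ((v i) • kinvM (Finsupp.single i 1)) j =
        if i = j then v i * (lam⁻¹ * q ^ (2 * (j : ℤ))) else 0 := by
      intro i
      rw [hkinv i]
      simp only [Finsupp.smul_apply, Finsupp.single_apply, smul_eq_mul, smul_ite, smul_zero]
      by_cases hij : i = j
      · subst hij; simp [mul_comm]
      · simp [hij]
    calc (v.sum fun i a => (a • kinvM (Finsupp.single i 1)) j)
        = v.sum fun i a => if i = j then v i * (lam⁻¹ * q ^ (2 * (j : ℤ))) else 0 :=
          Finsupp.sum_congr fun i _ => h1 i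
      _ = _ := by
          rw [Finsupp.sum_ite_eq' v j]
          split_ifs with h
          · rfl
          · rw [Finsupp.notMem_support_iff.mp h, zero_mul]
  constructor
  · -- irreducible → λ ≠ ±qⁿ
    intro hirr n
    have hzn : q ^ (-(n : ℤ)) = (q ^ n)⁻¹ := by rw [zpow_neg, zpow_natCast]
    have hzp : q ^ ((n : ℤ)) = q ^ n := zpow_natCast q n
    have keyne : lam * q ^ (-(n : ℤ)) - lam⁻¹ * q ^ ((n : ℤ)) ≠ 0 := by
      intro hcn
      -- build the invariant submodule of vectors vanishing in degrees ≤ n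
      set W : Submodule F (ℕ →₀ F) :=
        { carrier := {v | ∀ i ≤ n, v i = 0}
          add_mem' := fun {a b} ha hb i hi => by
            simp [Finsupp.add_apply, ha i hi, hb i hi]
          zero_mem' := fun i _ => rfl
          smul_mem' := fun c v hv i hi => by
            simp [Finsupp.smul_apply, hv i hi] } with hWdef
      have hmem : ∀ v : ℕ →₀ F, v ∈ W ↔ ∀ i ≤ n, v i = 0 := fun v => Iff.rfl
      have hWE : W ≤ W.comap eM := by
        intro v hv
        rw [Submodule.mem_comap, hmem]
        intro i hi
        rw [eval_e v i]
        rcases lt_or_eq_of_le hi with h | h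
        · rw [(hmem v).mp hv (i + 1) (by omega), zero_mul]
        · subst h
          rw [hcn, zero_div, mul_zero]
      have hWF : W ≤ W.comap fM := by
        intro v hv
        rw [Submodule.mem_comap, hmem]
        intro i hi
        cases i with
        | zero => exact eval_f0 v
        | succ j =>
          rw [eval_fs v j, (hmem v).mp hv j (by omega), zero_mul]
      have hWK : W ≤ W.comap kM := by
        intro v hv
        rw [Submodule.mem_comap, hmem]
        intro i hi
        rw [eval_k v i, (hmem v).mp hv i hi, zero_mul]
      have hWKinv : W ≤ W.comap kinvM := by
        intro v hv
        rw [Submodule.mem_comap, hmem]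
        intro i hi
        rw [eval_kinv v i, (hmem v).mp hv i hi, zero_mul]
      rcases hirr W hWE hWF hWK hWKinv with h | h
      · have : Finsupp.single (n + 1) (1 : F) ∈ W := by
          rw [hmem]
          intro i hi
          rw [Finsupp.single_apply, if_neg (by omega)]
        rw [h, Submodule.mem_bot] at this
        exact one_ne_zero (Finsupp.single_eq_zero.mp this)
      · have : Finsupp.single 0 (1 : F) ∈ W := h ▸ Submodule.mem_top
        have h0 := (hmem _).mp this 0 (Nat.zero_le n)
        rw [Finsupp.single_apply, if_pos rfl] at h0
        exact one_ne_zero h0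
    constructor
    · intro h
      apply keyne
      rw [h, hzn, hzp, mul_inv_cancel₀ (pow_ne_zero n hq0),
        inv_mul_cancel₀ (pow_ne_zero n hq0), sub_self]
    · intro h
      apply keyne
      rw [h, hzn, hzp]
      field_simp
      ring
  · -- λ ≠ ±qⁿ → irreducible
    intro hne W hWE hWF _ _
    by_cases hbot : W = ⊥
    · exact Or.inl hbot
    right
    -- the E-coefficients are nonzero
    have hc : ∀ i : ℕ, (lam * q ^ (-(i : ℤ)) - lam⁻¹ * q ^ ((i : ℤ))) / (q - q⁻¹) ≠ 0 := by
      intro i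
      refine div_ne_zero ?_ hq2
      intro h
      rw [zpow_neg, zpow_natCast] at h
      have hq' : q ^ i ≠ 0 := pow_ne_zero i hq0
      have h2 := sub_eq_zero.mp h
      field_simp at h2
      have h3 : (lam - q ^ i) * (lam + q ^ i) = 0 := by linear_combination h2
      rcases mul_eq_zero.mp h3 with h4 | h4
      · exact (hne i).1 (sub_eq_zero.mp h4)
      · exact (hne i).2 (eq_neg_of_add_eq_zero_left h4)
    -- the F-coefficients are nonzero
    have hfc : ∀ i : ℕ, (q ^ (i + 1) - q⁻¹ ^ (i + 1)) / (q - q⁻¹) ≠ 0 := by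
      intro i
      refine div_ne_zero ?_ hq2
      intro h
      have h' : q ^ (i + 1) = q⁻¹ ^ (i + 1) := sub_eq_zero.mp h
      apply hqroot (2 * (i + 1)) (by omega)
      calc q ^ (2 * (i + 1)) = q ^ (i + 1) * q ^ (i + 1) := by ring
        _ = q ^ (i + 1) * q⁻¹ ^ (i + 1) := by rw [← h']
        _ = (q * q⁻¹) ^ (i + 1) := (mul_pow _ _ _).symm
        _ = 1 := by rw [mul_inv_cancel₀ hq0, one_pow]
    -- a nonzero element of W
    obtain ⟨w, hwW, hw0⟩ : ∃ w ∈ W, w ≠ 0 := by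
      by_contra h
      push_neg at h
      exact hbot ((Submodule.eq_bot_iff W).mpr h)
    -- single 0 1 ∈ W, by induction on the degree
    have main : ∀ d : ℕ, ∀ w : ℕ →₀ F, w ∈ W → w ≠ 0 → (∀ j, d < j → w j = 0) →
        Finsupp.single 0 (1 : F) ∈ W := by
      intro d
      induction d with
      | zero =>
        intro w hwW hw0 hsupp
        have h0 : w 0 ≠ 0 := by
          intro h
          apply hw0
          ext j
          cases j with
          | zero => exact h
          | succ k => exact hsupp (k + 1) (by omega)
        have hw : (w 0)⁻¹ • w = Finsupp.single 0 (1 : F) := by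
          ext j
          cases j with
          | zero => simp [Finsupp.smul_apply, inv_mul_cancel₀ h0]
          | succ k => simp [Finsupp.smul_apply, hsupp (k + 1) (by omega)]
        exact hw ▸ W.smul_mem _ hwW
      | succ d ih =>
        intro w hwW hw0 hsupp
        by_cases htop : w (d + 1) = 0
        · refine ih w hwW hw0 fun j hj => ?_
          rcases Nat.eq_or_lt_of_le hj with h | h
          · exact h ▸ htop
          · exact hsupp j h
        · have huW : eM w ∈ W := hWE hwW
          have hud : (eM w) d ≠ 0 := by
            rw [eval_e]
            exact mul_ne_zero htop (hc d)
          have hu0 : eM w ≠ 0 := fun h => hud (by rw [h]; rfl)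
          refine ih (eM w) huW hu0 fun j hj => ?_
          rw [eval_e, hsupp (j + 1) (by omega), zero_mul]
    have hA : Finsupp.single 0 (1 : F) ∈ W :=
      main (w.support.sup id) w hwW hw0 fun j hj => by
        by_contra h
        exact absurd (Finset.le_sup (f := id) (Finsupp.mem_support_iff.mpr h))
          (by simpa using (by omega : ¬ j ≤ w.support.sup id))
    -- all basis vectors lie in W
    have hB : ∀ i : ℕ, Finsupp.single i (1 : F) ∈ W := by
      intro i
      induction i with
      | zero => exact hA
      | succ i ih =>
        have h1 : fM (Finsupp.single i 1) ∈ W := hWF ih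
        rw [hf i] at h1
        have h2 := W.smul_mem ((q ^ (i + 1) - q⁻¹ ^ (i + 1)) / (q - q⁻¹))⁻¹ h1
        rw [smul_smul, inv_mul_cancel₀ (hfc i), one_smul] at h2
        exact h2
    -- conclude
    rw [eq_top_iff]
    intro v _
    rw [← Finsupp.sum_single v]
    refine Submodule.sum_mem W fun i _ => ?_
    rw [← Finsupp.smul_single_one]
    exact W.smul_mem _ (hB i)
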